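/- Let a < b be coprime positive integers. For any real t1, t2 there exist a real number x' and integers k1', k2' such that a·x' − (t1 + k1') = −(b·x' − (t2 + k2')) and max(|a·x' − (t1+k1')|, |b·x' − (t2+k2')|) = 1/(a+b) − μ_{a,b}(t1,t2). -/

import Mathlib

/-- Distance from a real number to the nearest integer. -/
noncomputable def dni (u : ℝ) : ℝ := |u - round u|

/-- Approximation cost of `(t1, t2)` relative to the two-element set `{a, b}`. -/
noncomputable def mu2 (a b : ℕ) (t1 t2 : ℝ) : ℝ :=
  ⨅ x : ℝ, max (dni (t1 - x * a)) (dni (t2 - x * b))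

/-- Approximation cost of `(t1, t2, t3)` relative to the set `{a, b, n}`. -/
noncomputable def mu3 (a b n : ℕ) (t1 t2 t3 : ℝ) : ℝ :=
  ⨅ x : ℝ, max (dni (t1 - x * a)) (max (dni (t2 - x * b)) (dni (t3 - x * n)))

/-- Angular Kronecker constant of `{a, b, n}`. -/
noncomputable def alpha3 (a b n : ℕ) : ℝ :=
  sSup {v : ℝ | ∃ t1 t2 t3 : ℝ, v = mu3 a b n t1 t2 t3}

/-- Binary Kronecker constant of `{a, b, n}`. -/
noncomputable def beta3 (a b n : ℕ) : ℝ :=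
  sSup {v : ℝ | ∃ t1 t2 t3 : ℝ, t1 ∈ ({0, 1/2} : Set ℝ) ∧ t2 ∈ ({0, 1/2} : Set ℝ) ∧
    t3 ∈ ({0, 1/2} : Set ℝ) ∧ v = mu3 a b n t1 t2 t3}

lemma dni_nonneg (u : ℝ) : 0 ≤ dni u := abs_nonneg _

lemma dni_add_int (r : ℝ) (k : ℤ) : dni (r + k) = dni r := by
  unfold dni
  rw [round_add_intCast]
  push_cast
  ring_nf

lemma dni_eq_abs (r : ℝ) (h : |r| ≤ 1/2) : dni r = |r| := by
  by_cases hr : r = 1/2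
  · subst hr
    unfold dni
    norm_num [round_eq]
  · have h1 : r ∈ Set.Ico (-(1/2):ℝ) (1/2) := by
      rcases abs_le.mp h with ⟨h2, h3⟩
      exact ⟨h2, lt_of_le_of_ne h3 hr⟩
    unfold dni
    rw [round_eq_zero_iff.mpr h1]
    simp

lemma abs_sub_round_min (c : ℝ) (n : ℤ) : |c - round c| ≤ |c - n| := by
  by_cases h : n = round c
  · subst h; rfl
  · have h1 : |c - round c| ≤ 1/2 := abs_sub_round c
    have h2 : (1:ℝ) ≤ |(round c : ℝ) - n| := by
      have : (1:ℤ) ≤ |round c - n| := Int.one_le_abs (sub_ne_zero.mpr (Ne.symm h))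
      exact_mod_cast (by push_cast; exact_mod_cast this : (1:ℝ) ≤ |((round c - n : ℤ) : ℝ)|)
    have h3 : |(round c : ℝ) - n| ≤ |(round c : ℝ) - c| + |c - n| := abs_sub_le _ _ _
    have h4 : |(round c : ℝ) - c| = |c - round c| := abs_sub_comm _ _
    linarith

lemma key (a b : ℕ) (hab : (0:ℝ) < a + b) (hcop : Nat.Coprime a b) (t1 t2 : ℝ) (m : ℤ) :
    ∃ (x : ℝ) (k1 k2 : ℤ),
      (a:ℝ) * x - (t1 + k1) = (a * t2 - b * t1 - m) / (a + b) ∧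
      (b:ℝ) * x - (t2 + k2) = -((a * t2 - b * t1 - m) / (a + b)) := by
  have h2 : IsCoprime (a:ℤ) (b:ℤ) := Int.isCoprime_iff_gcd_eq_one.mpr (by simpa using hcop)
  obtain ⟨p, q, hpq⟩ := h2
  -- (p - q) * a + q * (a + b) = p*a + q*b = 1
  set u : ℤ := p - q
  set v : ℤ := q
  have huv : u * a + v * ((a:ℤ) + b) = 1 := by simp only [u, v]; linarith [hpq]
  refine ⟨(t1 + t2 + ((-m*u : ℤ) : ℝ)) / (a + b), m*v, (-m*u) - m*v, ?_, ?_⟩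
  · have hint : (a:ℤ) * (-m*u) - ((a:ℤ)+b) * (m*v) = -m := by linear_combination (-m) * huv
    have hR : (a:ℝ) * ((-m*u : ℤ):ℝ) - ((a:ℝ)+b) * ((m*v : ℤ):ℝ) = -(m:ℝ) := by
      exact_mod_cast congrArg (fun z : ℤ => (z:ℝ)) hint
    field_simp
    push_cast at hR ⊢
    ring_nf
    ring_nf at hR
    linarith
  · have hint : (b:ℤ) * (-m*u) - ((a:ℤ)+b) * ((-m*u) - m*v) = m := by linear_combination m * huv
    have hR : (b:ℝ) * ((-m*u : ℤ):ℝ) - ((a:ℝ)+b) * (((-m*u) - m*v : ℤ):ℝ) = (m:ℝ) := by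
      exact_mod_cast congrArg (fun z : ℤ => (z:ℝ)) hint
    field_simp
    push_cast at hR ⊢
    ring_nf
    ring_nf at hR
    linarith

lemma mu2_eq (a b : ℕ) (ha : 0 < a) (hcop : Nat.Coprime a b) (t1 t2 : ℝ) :
    mu2 a b t1 t2 = |a * t2 - b * t1 - round ((a:ℝ) * t2 - b * t1)| / (a + b) := by
  have hab : (0:ℝ) < a + b := by positivity
  set c : ℝ := (a:ℝ) * t2 - b * t1 with hc
  set d : ℝ := c - round c with hd
  have hd2 : |d| ≤ 1/2 := abs_sub_round c
  apply le_antisymm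
  · -- upper bound
    obtain ⟨x, k1, k2, h1, h2⟩ := key a b hab hcop t1 t2 (round c)
    rw [← hc] at h1 h2
    have h1ab : (1:ℝ) ≤ a + b := by
      have ha1 : (1:ℝ) ≤ (a:ℝ) := by exact_mod_cast ha
      have hb0 : (0:ℝ) ≤ (b:ℝ) := by positivity
      linarith
    have hr : |(c - round c) / (a+b)| ≤ 1/2 := by
      rw [abs_div, abs_of_pos hab, div_le_iff₀ hab]
      nlinarith [abs_sub_round c, abs_nonneg (c - (round c : ℝ))]
    have hfx : max (dni (t1 - x * a)) (dni (t2 - x * b)) = |d| / (a+b) := by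
      have e1 : t1 - x * a = (-((c - round c)/(a+b))) + (-k1 : ℤ) := by
        push_cast
        linarith [h1, mul_comm x (a:ℝ)]
      have e2 : t2 - x * b = ((c - round c)/(a+b)) + (-k2 : ℤ) := by
        push_cast
        linarith [h2, mul_comm x (b:ℝ)]
      rw [e1, e2, dni_add_int, dni_add_int, dni_eq_abs _ (by rwa [abs_neg]),
        dni_eq_abs _ hr, abs_neg, max_self, abs_div, abs_of_pos hab]
    calc mu2 a b t1 t2 ≤ max (dni (t1 - x * a)) (dni (t2 - x * b)) := by
          apply ciInf_le
          refine ⟨0, ?_⟩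
          rintro _ ⟨y, rfl⟩
          exact le_max_of_le_left (dni_nonneg _)
      _ = |d| / (a+b) := hfx
  · -- lower bound
    apply le_ciInf
    intro x
    set uu : ℝ := t1 - x * a
    set vv : ℝ := t2 - x * b
    have hcuv : c = (a:ℝ) * vv - b * uu := by simp only [uu, vv, hc]; ring
    have hN : |d| ≤ |c - ((a * round vv - b * round uu : ℤ) : ℝ)| :=
      abs_sub_round_min c _
    have hRHS : |c - ((a * round vv - b * round uu : ℤ) : ℝ)|
        ≤ (a:ℝ) * dni vv + b * dni uu := by
      have : c - ((a * round vv - b * round uu : ℤ) : ℝ)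
          = (a:ℝ) * (vv - round vv) - b * (uu - round uu) := by
        push_cast; rw [hcuv]; ring
      rw [this]
      calc |(a:ℝ) * (vv - round vv) - b * (uu - round uu)|
          ≤ |(a:ℝ) * (vv - round vv)| + |(b:ℝ) * (uu - round uu)| := abs_sub _ _
        _ = (a:ℝ) * dni vv + b * dni uu := by
            rw [abs_mul, abs_mul, abs_of_nonneg (by positivity : (0:ℝ) ≤ (a:ℝ)),
              abs_of_nonneg (by positivity : (0:ℝ) ≤ (b:ℝ))]
            rfl
    set M := max (dni uu) (dni vv) with hM
    have hbound : (a:ℝ) * dni vv + b * dni uu ≤ (a + b) * M := by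
      have h1 : dni vv ≤ M := le_max_right _ _
      have h2 : dni uu ≤ M := le_max_left _ _
      have ha' : (0:ℝ) ≤ a := by positivity
      have hb' : (0:ℝ) ≤ b := by positivity
      nlinarith
    rw [div_le_iff₀ hab]
    calc |d| ≤ (a:ℝ) * dni vv + b * dni uu := le_trans hN hRHS
      _ ≤ (a+b) * M := hbound
      _ = M * (a+b) := mul_comm _ _

theorem stmt_2 (a b : ℕ) (ha : 0 < a) (hab : a < b) (hcop : Nat.Coprime a b)
    (t1 t2 : ℝ) :
    ∃ (x' : ℝ) (k1' k2' : ℤ),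
      a * x' - (t1 + k1') = -(b * x' - (t2 + k2')) ∧
      max |a * x' - (t1 + k1')| |b * x' - (t2 + k2')| =
        1 / (a + b) - mu2 a b t1 t2 := by
  have habR : (0:ℝ) < a + b := by positivity
  set c : ℝ := (a:ℝ) * t2 - b * t1 with hc
  set d : ℝ := c - round c with hd
  have hd2 : |d| ≤ 1/2 := abs_sub_round c
  set s : ℤ := if 0 ≤ d then 1 else -1 with hs
  obtain ⟨x, k1, k2, h1, h2⟩ := key a b habR hcop t1 t2 (round c + s)
  have hcm : c - ((round c + s : ℤ) : ℝ) = d - s := by push_cast [hd]; ring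
  rw [← hc, hcm] at h1 h2
  refine ⟨x, k1, k2, ?_, ?_⟩
  · rw [h1, h2, neg_neg]
  · rw [h1, h2, abs_neg, max_self]
    obtain ⟨hdl, hdr⟩ := abs_le.mp hd2
    have hds : |d - (s:ℝ)| = 1 - |d| := by
      by_cases h : 0 ≤ d
      · simp only [hs, if_pos h]
        push_cast
        rw [abs_of_nonneg h, abs_of_nonpos (by linarith : d - 1 ≤ 0)]
        ring
      · simp only [hs, if_neg h]
        push_neg at h
        push_cast
        rw [show d - (-1:ℝ) = d + 1 from by ring, abs_of_nonneg (by linarith : (0:ℝ) ≤ d + 1),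
          abs_of_neg h]
        ring
    rw [abs_div, hds, abs_of_pos habR, mu2_eq a b ha hcop t1 t2, ← hc, ← hd]
    field_simp
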